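/- The Choquet integral with respect to a symmetric monotone measure μ on a finite set X of size n equals the ordered weighted average (OWA) with weight vector w_i = μ(A_i) − μ(A_{i−1}), where A_i denotes any subset of cardinality i; that is, ∫f dμ = Σ_{i=1}^n w_i · f(x_{σ(i)}), where σ orders values decreasingly: f(x_{σ(1)}) ≥ ... ≥ f(x_{σ(n)}). -/

import Mathlib

open Finset

structure MonMeasure (n : ℕ) where
  m : Finset (Fin n) → ℝ
  empty : m ∅ = 0
  univ : m Finset.univ = 1
  nonneg : ∀ A, 0 ≤ m A
  le_one : ∀ A, m A ≤ 1
  mono : ∀ ⦃A B : Finset (Fin n)⦄, A ⊆ B → m A ≤ m B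

/-- The value `f(x*_{i+1})` (1-based) of the increasing ordering `σ`, i.e. `f (σ i)` (0-based). -/
noncomputable def vals {n : ℕ} (f : Fin n → ℝ) (σ : Equiv.Perm (Fin n)) (i : ℕ) : ℝ :=
  if h : i < n then f (σ ⟨i, h⟩) else 0

/-- The set `A*_{i+1} = {x*_{i+1}, ..., x*_n}` (1-based), i.e. `{σ j : j ≥ i}` (0-based). -/
def upSet {n : ℕ} (σ : Equiv.Perm (Fin n)) (i : ℕ) : Finset (Fin n) :=
  (Finset.univ.filter (fun j : Fin n => i ≤ (j : ℕ))).image σ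

/-- The Choquet integral `∫ f dμ = Σ_{i=1}^n μ(A*_i)·[f(x*_i) − f(x*_{i−1})]`, where
`σ` enumerates `X` so that `f∘σ` is increasing, and `f(x*_0) := 0`. -/
noncomputable def choquet {n : ℕ} (μ : Finset (Fin n) → ℝ) (f : Fin n → ℝ)
    (σ : Equiv.Perm (Fin n)) : ℝ :=
  ∑ i ∈ Finset.range n,
    μ (upSet σ i) * (vals f σ i - if i = 0 then 0 else vals f σ (i - 1))

private lemma key_telescope (n : ℕ) (g v : ℕ → ℝ) (hg0 : g 0 = 0) :
    ∑ i ∈ Finset.range n, g (n - i) * (v i - if i = 0 then 0 else v (i - 1))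
      = ∑ i ∈ Finset.range n, (g (n - i) - g (n - 1 - i)) * v i := by
  set F : ℕ → ℝ := fun i => g (n - i) * (if i = 0 then 0 else v (i - 1)) with hF
  have h1 : ∑ i ∈ Finset.range n, F i = ∑ i ∈ Finset.range n, g (n - 1 - i) * v i := by
    have hs := Finset.sum_range_succ' F n
    have hs2 := Finset.sum_range_succ F n
    have hF0 : F 0 = 0 := by simp [hF]
    have hFn : F n = 0 := by simp [hF, hg0]
    have : ∑ i ∈ Finset.range n, F (i + 1) = ∑ i ∈ Finset.range n, F i := by
      rw [hs2, hFn, add_zero] at hs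
      rw [hF0, add_zero] at hs
      exact hs.symm
    rw [← this]
    refine Finset.sum_congr rfl fun i _ => ?_
    simp only [hF, Nat.succ_ne_zero, if_false, Nat.add_sub_cancel]
    congr 2
    omega
  calc ∑ i ∈ Finset.range n, g (n - i) * (v i - if i = 0 then 0 else v (i - 1))
      = ∑ i ∈ Finset.range n, (g (n - i) * v i - F i) := by
        refine Finset.sum_congr rfl fun i _ => ?_; simp only [hF]; ring
    _ = ∑ i ∈ Finset.range n, g (n - i) * v i - ∑ i ∈ Finset.range n, F i :=
        Finset.sum_sub_distrib _ _
    _ = _ := by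
        rw [h1, ← Finset.sum_sub_distrib]
        refine Finset.sum_congr rfl fun i _ => ?_; ring

theorem stmt_3 (n : ℕ) (M : MonMeasure n)
    (hsymm : ∀ A B : Finset (Fin n), A.card = B.card → M.m A = M.m B)
    (f : Fin n → ℝ) (σ τ : Equiv.Perm (Fin n))
    (hσ : Monotone (fun i : Fin n => f (σ i)))
    (hτ : Antitone (fun i : Fin n => f (τ i))) :
    choquet M.m f σ =
      ∑ i ∈ Finset.range n,
        (M.m (Finset.univ.filter (fun k : Fin n => (k : ℕ) < i + 1)) -
          M.m (Finset.univ.filter (fun k : Fin n => (k : ℕ) < i))) * vals f τ i := by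
  set g : ℕ → ℝ := fun k => M.m (Finset.univ.filter (fun j : Fin n => (j : ℕ) < k)) with hg
  have hg0 : g 0 = 0 := by
    have : (Finset.univ.filter (fun j : Fin n => (j : ℕ) < 0)) = ∅ := by simp
    simp [hg, this, M.empty]
  -- cardinality of the lower filter
  have hcard : ∀ k : ℕ, k ≤ n →
      (Finset.univ.filter (fun j : Fin n => (j : ℕ) < k)).card = k := by
    intro k hk
    have : (Finset.univ.filter (fun j : Fin n => (j : ℕ) < k))
        = Finset.map (Fin.castLEEmb hk) Finset.univ := by
      ext j
      rw [Finset.mem_filter, Finset.mem_map]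
      simp only [Finset.mem_univ, true_and, Fin.castLEEmb_apply]
      constructor
      · intro hj; exact ⟨⟨j, hj⟩, Fin.ext rfl⟩
      · rintro ⟨a, rfl⟩; simp
    rw [this, Finset.card_map, Finset.card_univ, Fintype.card_fin]
  -- measure of upSet
  have hup : ∀ i : ℕ, i < n → M.m (upSet σ i) = g (n - i) := by
    intro i hi
    apply hsymm
    rw [hcard (n - i) (Nat.sub_le _ _)]
    rw [upSet, Finset.card_image_of_injective _ σ.injective]
    have : (Finset.univ.filter (fun j : Fin n => i ≤ (j : ℕ)))
        = (Finset.univ.filter (fun j : Fin n => (j : ℕ) < i))ᶜ := by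
      ext j; simp [not_lt]
    rw [this, Finset.card_compl, hcard i (le_of_lt hi), Fintype.card_fin]
  -- sorted values coincide
  have huniq : f ∘ σ = f ∘ (Fin.revPerm.trans τ) := by
    apply Tuple.unique_monotone hσ
    intro a b hab
    exact hτ (by simpa using Fin.rev_le_rev.mpr hab)
  have hval : ∀ j : ℕ, j < n → vals f τ (n - 1 - j) = vals f σ j := by
    intro j hj
    have h1 : n - 1 - j < n := by omega
    rw [vals, vals, dif_pos h1, dif_pos hj]
    have := congrFun huniq ⟨j, hj⟩
    simp only [Function.comp_apply, Equiv.trans_apply, Fin.revPerm_apply] at this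
    rw [this]
    have he : Fin.rev (⟨j, hj⟩ : Fin n) = ⟨n - 1 - j, h1⟩ := by
      ext; show n - (j + 1) = n - 1 - j; omega
    rw [he]
  -- rewrite RHS via reflection
  have hrhs : ∑ i ∈ Finset.range n, (g (i + 1) - g i) * vals f τ i
      = ∑ i ∈ Finset.range n, (g (n - i) - g (n - 1 - i)) * vals f σ i := by
    rw [← Finset.sum_range_reflect (fun i => (g (i + 1) - g i) * vals f τ i) n]
    refine Finset.sum_congr rfl fun j hj => ?_
    rw [Finset.mem_range] at hj
    rw [hval j hj]
    have h2 : n - 1 - j + 1 = n - j := by omega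
    rw [h2]
  calc choquet M.m f σ
      = ∑ i ∈ Finset.range n, g (n - i) * (vals f σ i - if i = 0 then 0 else vals f σ (i - 1)) := by
        rw [choquet]
        exact Finset.sum_congr rfl fun i hi => by rw [hup i (Finset.mem_range.mp hi)]
    _ = ∑ i ∈ Finset.range n, (g (n - i) - g (n - 1 - i)) * vals f σ i :=
        key_telescope n g (vals f σ) hg0
    _ = _ := by rw [← hrhs]
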